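/- Let ε ≥ 0 and set I⁺ = {i : u_i − x_i ≤ ε} and I⁻ = {i : x_i − l_i ≤ ε}; assume I⁺ and I⁻ are disjoint. Let K = {w ∈ ℝⁿ : w_i ≥ 0 for i ∈ I⁺, w_i ≤ 0 for i ∈ I⁻, w_i = 0 otherwise} and K° = {w ∈ ℝⁿ : w_i ≤ 0 for i ∈ I⁺, w_i ≥ 0 for i ∈ I⁻}. Then χ(x) ≤ ‖[−∇f(x)]_{K°}‖ + √n · ‖[−∇f(x)]_K‖ · ε, where [·]_K and [·]_{K°} denote the metric projections onto K and K°. -/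

import Mathlib

/-- Uniqueness of the metric projection onto a convex set in a real inner
product space. -/
lemma proj_unique_aux {E : Type*} [NormedAddCommGroup E] [InnerProductSpace ℝ E]
    {s : Set E} (hs : Convex ℝ s) {g a b : E} (ha : a ∈ s) (hb : b ∈ s)
    (hma : ∀ q ∈ s, ‖g - a‖ ≤ ‖g - q‖) (hmb : ∀ q ∈ s, ‖g - b‖ ≤ ‖g - q‖) :
    a = b := by
  have hm : (1/2 : ℝ) • a + (1/2 : ℝ) • b ∈ s :=
    hs ha hb (by norm_num) (by norm_num) (by norm_num)
  set m := (1/2 : ℝ) • a + (1/2 : ℝ) • b with hmdef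
  have h1 : ‖g - a‖ ≤ ‖g - m‖ := hma _ hm
  have h2 : ‖g - b‖ ≤ ‖g - m‖ := hmb _ hm
  have hpar := parallelogram_law_with_norm ℝ (g - a) (g - b)
  have hsum : (g - a) + (g - b) = (2 : ℝ) • (g - m) := by
    rw [hmdef]; module
  have hnorm2 : ‖(g - a) + (g - b)‖ = 2 * ‖g - m‖ := by
    rw [hsum, norm_smul]; simp [Real.norm_ofNat]
  have hdiff : (g - a) - (g - b) = b - a := by abel
  rw [hnorm2, hdiff] at hpar
  have hba : ‖b - a‖ * ‖b - a‖ ≤ 0 := by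
    nlinarith [norm_nonneg (g - m), norm_nonneg (g - a), norm_nonneg (g - b)]
  have hzero : ‖b - a‖ = 0 := by nlinarith [norm_nonneg (b - a)]
  exact (sub_eq_zero.mp (norm_eq_zero.mp hzero)).symm

/-- Proposition 4 (Kolda–Lewis–Torczon): bound for the stationarity measure,
  χ(x) ≤ ‖[−∇f(x)]_{K°}‖ + √n · ‖[−∇f(x)]_K‖ · ε. -/
theorem stmt_6 (n : ℕ) (hn : 1 ≤ n)
    (l u : Fin n → ℝ) (hlu : ∀ i, l i < u i)
    (Ω : Set (EuclideanSpace ℝ (Fin n)))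
    (hΩ : Ω = {y | ∀ i, l i ≤ y i ∧ y i ≤ u i})
    (f : EuclideanSpace ℝ (Fin n) → ℝ)
    (x : EuclideanSpace ℝ (Fin n)) (hx : x ∈ Ω)
    (hdiff : DifferentiableAt ℝ f x)
    (ε : ℝ) (hε : 0 ≤ ε)
    (Ip Im : Set (Fin n))
    (hIp : Ip = {i | u i - x i ≤ ε}) (hIm : Im = {i | x i - l i ≤ ε})
    (hdisj : Disjoint Ip Im)
    (K Kpolar : Set (EuclideanSpace ℝ (Fin n)))
    (hK : K = {w | (∀ i ∈ Ip, 0 ≤ w i) ∧ (∀ i ∈ Im, w i ≤ 0)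
        ∧ (∀ i, i ∉ Ip → i ∉ Im → w i = 0)})
    (hKpolar : Kpolar = {w | (∀ i ∈ Ip, w i ≤ 0) ∧ (∀ i ∈ Im, 0 ≤ w i)})
    (pK pKpolar : EuclideanSpace ℝ (Fin n))
    (hpKmem : pK ∈ K)
    (hpKproj : ∀ q ∈ K, ‖-gradient f x - pK‖ ≤ ‖-gradient f x - q‖)
    (hpKpmem : pKpolar ∈ Kpolar)
    (hpKpproj : ∀ q ∈ Kpolar, ‖-gradient f x - pKpolar‖ ≤ ‖-gradient f x - q‖)
    (χ : ℝ)
    (hχ : χ = sSup {r : ℝ | ∃ ω : EuclideanSpace ℝ (Fin n),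
        x + ω ∈ Ω ∧ ‖ω‖ ≤ 1 ∧ r = -(inner ℝ (gradient f x) ω : ℝ)}) :
    χ ≤ ‖pKpolar‖ + Real.sqrt n * ‖pK‖ * ε := by
  classical
  set g : EuclideanSpace ℝ (Fin n) := -gradient f x with hg
  -- explicit projections
  set q : EuclideanSpace ℝ (Fin n) :=
    WithLp.toLp 2 (fun i => if i ∈ Ip then max (g i) 0 else if i ∈ Im then min (g i) 0 else 0) with hq
  have hqK : q ∈ K := by
    rw [hK]
    refine ⟨fun i hi => ?_, fun i hi => ?_, fun i hip him => ?_⟩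
    · simp only [hq, if_pos hi]; exact le_max_right _ _
    · have hip : i ∉ Ip := fun h => (hdisj.le_bot ⟨h, hi⟩)
      simp only [hq, if_neg hip, if_pos hi]; exact min_le_right _ _
    · simp only [hq, if_neg hip, if_neg him]
  have hqmin : ∀ w ∈ K, ‖g - q‖ ≤ ‖g - w‖ := by
    intro w hw
    rw [hK] at hw
    obtain ⟨hw1, hw2, hw3⟩ := hw
    rw [EuclideanSpace.norm_eq, EuclideanSpace.norm_eq]
    apply Real.sqrt_le_sqrt
    apply Finset.sum_le_sum
    intro i _
    have key : |g i - q i| ≤ |g i - w i| := by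
      by_cases hip : i ∈ Ip
      · simp only [hq, if_pos hip]
        have := hw1 i hip
        rcases le_or_gt 0 (g i) with h | h
        · rw [max_eq_left h]; simp [abs_nonneg]
        · rw [max_eq_right h.le]
          rw [abs_of_nonpos (by linarith), abs_of_nonpos (by linarith)]
          linarith
      · by_cases him : i ∈ Im
        · simp only [hq, if_neg hip, if_pos him]
          have := hw2 i him
          rcases le_or_gt (g i) 0 with h | h
          · rw [min_eq_left h]; simp [abs_nonneg]
          · rw [min_eq_right h.le]
            rw [abs_of_nonneg (by linarith), abs_of_nonneg (by linarith)]
            linarith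
        · simp only [hq, if_neg hip, if_neg him, hw3 i hip him]
          exact le_rfl
    have hsq : ‖g i - q i‖ ^ 2 ≤ ‖g i - w i‖ ^ 2 := by
      rw [Real.norm_eq_abs, Real.norm_eq_abs, sq_abs, sq_abs, ← sq_abs (g i - q i),
        ← sq_abs (g i - w i)]
      exact pow_le_pow_left₀ (abs_nonneg _) key 2
    simpa using hsq
  set r : EuclideanSpace ℝ (Fin n) := g - q with hr
  have hri : ∀ i, r i = g i - q i := fun i => rfl
  have hrKp : r ∈ Kpolar := by
    rw [hKpolar]
    constructor
    · intro i hi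
      rw [hri]
      simp only [hq, if_pos hi]
      rcases le_or_gt 0 (g i) with h | h
      · rw [max_eq_left h]; linarith
      · rw [max_eq_right h.le]; linarith
    · intro i hi
      have hip : i ∉ Ip := fun h => (hdisj.le_bot ⟨h, hi⟩)
      rw [hri]
      simp only [hq, if_neg hip, if_pos hi]
      rcases le_or_gt (g i) 0 with h | h
      · rw [min_eq_left h]; linarith
      · rw [min_eq_right h.le]; linarith
  have hrmin : ∀ w ∈ Kpolar, ‖g - r‖ ≤ ‖g - w‖ := by
    intro w hw
    rw [hKpolar] at hw
    obtain ⟨hw1, hw2⟩ := hw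
    rw [EuclideanSpace.norm_eq, EuclideanSpace.norm_eq]
    apply Real.sqrt_le_sqrt
    apply Finset.sum_le_sum
    intro i _
    have hgr : g i - r i = q i := by rw [hri]; ring
    have key : |g i - r i| ≤ |g i - w i| := by
      rw [hgr]
      by_cases hip : i ∈ Ip
      · simp only [hq, if_pos hip]
        have := hw1 i hip
        rcases le_or_gt 0 (g i) with h | h
        · rw [max_eq_left h, abs_of_nonneg h, abs_of_nonneg (by linarith)]; linarith
        · rw [max_eq_right h.le]; simp [abs_nonneg]
      · by_cases him : i ∈ Im
        · simp only [hq, if_neg hip, if_pos him]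
          have := hw2 i him
          rcases le_or_gt (g i) 0 with h | h
          · rw [min_eq_left h, abs_of_nonpos h, abs_of_nonpos (by linarith)]; linarith
          · rw [min_eq_right h.le]; simp [abs_nonneg]
        · simp only [hq, if_neg hip, if_neg him]; simp [abs_nonneg]
    have hsq : ‖g i - r i‖ ^ 2 ≤ ‖g i - w i‖ ^ 2 := by
      rw [Real.norm_eq_abs, Real.norm_eq_abs, sq_abs, sq_abs, ← sq_abs (g i - r i),
        ← sq_abs (g i - w i)]
      exact pow_le_pow_left₀ (abs_nonneg _) key 2
    simpa using hsq
  -- convexity of K and Kpolar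
  have hKconv : Convex ℝ K := by
    rw [hK]
    intro a ha b hb s t hs ht hst
    refine ⟨fun i hi => ?_, fun i hi => ?_, fun i hip him => ?_⟩
    · have h1 := ha.1 i hi; have h2 := hb.1 i hi
      have : (s • a + t • b) i = s * a i + t * b i := rfl
      rw [this]; positivity
    · have h1 := ha.2.1 i hi; have h2 := hb.2.1 i hi
      have : (s • a + t • b) i = s * a i + t * b i := rfl
      rw [this]
      have := mul_nonpos_of_nonneg_of_nonpos hs h1
      have := mul_nonpos_of_nonneg_of_nonpos ht h2
      linarith
    · have h1 := ha.2.2 i hip him; have h2 := hb.2.2 i hip him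
      have : (s • a + t • b) i = s * a i + t * b i := rfl
      rw [this, h1, h2]; ring
  have hKpconv : Convex ℝ Kpolar := by
    rw [hKpolar]
    intro a ha b hb s t hs ht hst
    refine ⟨fun i hi => ?_, fun i hi => ?_⟩
    · have h1 := ha.1 i hi; have h2 := hb.1 i hi
      have : (s • a + t • b) i = s * a i + t * b i := rfl
      rw [this]
      have := mul_nonpos_of_nonneg_of_nonpos hs h1
      have := mul_nonpos_of_nonneg_of_nonpos ht h2
      linarith
    · have h1 := ha.2 i hi; have h2 := hb.2 i hi
      have : (s • a + t • b) i = s * a i + t * b i := rfl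
      rw [this]; positivity
  -- identify pK and pKpolar
  have hpKeq : pK = q := proj_unique_aux hKconv hpKmem hqK hpKproj hqmin
  have hpKpeq : pKpolar = r := proj_unique_aux hKpconv hpKpmem hrKp hpKpproj hrmin
  have hdecomp : g = pK + pKpolar := by rw [hpKeq, hpKpeq, hr]; abel
  -- main bound
  rw [hχ]
  apply Real.sSup_le
  · rintro v ⟨ω, hωΩ, hωnorm, hveq⟩
    have hv : v = (inner ℝ g ω : ℝ) := by
      rw [hveq, hg, inner_neg_left]
    rw [hv, hdecomp, inner_add_left]
    have hbound1 : (inner ℝ pKpolar ω : ℝ) ≤ ‖pKpolar‖ := by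
      calc (inner ℝ pKpolar ω : ℝ) ≤ ‖pKpolar‖ * ‖ω‖ := real_inner_le_norm _ _
        _ ≤ ‖pKpolar‖ * 1 := by
            exact mul_le_mul_of_nonneg_left hωnorm (norm_nonneg _)
        _ = ‖pKpolar‖ := mul_one _
    have hbound2 : (inner ℝ pK ω : ℝ) ≤ Real.sqrt n * ‖pK‖ * ε := by
      rw [hK] at hpKmem
      obtain ⟨hp1, hp2, hp3⟩ := hpKmem
      have hinner : (inner ℝ pK ω : ℝ) = ∑ i, pK i * ω i := by
        rw [PiLp.inner_apply]
        simp [RCLike.inner_apply, mul_comm]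
      rw [hinner]
      have hωbound : ∀ i, pK i * ω i ≤ |pK i| * ε := by
        intro i
        rw [hΩ] at hωΩ
        have hxi := (hωΩ i)
        have hadd : (x + ω) i = x i + ω i := rfl
        rw [hadd] at hxi
        by_cases hip : i ∈ Ip
        · have h1 : ω i ≤ ε := by
            rw [hIp] at hip
            simp only [Set.mem_setOf_eq] at hip
            linarith [hxi.2]
          have h2 : 0 ≤ pK i := hp1 i hip
          rw [abs_of_nonneg h2]
          exact mul_le_mul_of_nonneg_left h1 h2
        · by_cases him : i ∈ Im
          · have h1 : -ε ≤ ω i := by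
              rw [hIm] at him
              simp only [Set.mem_setOf_eq] at him
              linarith [hxi.1]
            have h2 : pK i ≤ 0 := hp2 i him
            rw [abs_of_nonpos h2]
            nlinarith
          · rw [hp3 i hip him]; simp [abs_nonneg, hε]
      calc ∑ i, pK i * ω i ≤ ∑ i, |pK i| * ε := Finset.sum_le_sum fun i _ => hωbound i
        _ = (∑ i, |pK i| * 1) * ε := by rw [Finset.sum_mul]; simp
        _ ≤ Real.sqrt (∑ i : Fin n, |pK i| ^ 2) * Real.sqrt (∑ _i : Fin n, (1:ℝ) ^ 2) * ε := by
            apply mul_le_mul_of_nonneg_right _ hε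
            exact Real.sum_mul_le_sqrt_mul_sqrt _ _ _
        _ = Real.sqrt n * ‖pK‖ * ε := by
            have h1 : Real.sqrt (∑ i : Fin n, |pK i| ^ 2) = ‖pK‖ := by
              rw [EuclideanSpace.norm_eq]
              simp_rw [Real.norm_eq_abs]
            have h2 : Real.sqrt (∑ _i : Fin n, (1:ℝ) ^ 2) = Real.sqrt n := by simp
            rw [h1, h2]
            ring
    linarith [hbound1, hbound2]
  · positivity
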